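/- In the search network together with the readout network for a finite directed graph G = (V, E), every neuron (the transmitter Tr, every H_e, and every R_e) spikes at most once over the entire run; consequently the total number of spikes over all time is at most 2|E| + 1. (This establishes the O(n) energy bound of the neuromorphic oracle query.) -/

import Mathlib

lemma indsum_le_one {R : Type*} [Semiring R] [PartialOrder R] [IsOrderedRing R] (s : Finset ℕ) (P : ℕ → Prop)
    [DecidablePred P] (h : ∀ a ∈ s, ∀ b ∈ s, P a → P b → a = b) :
    ∑ σ ∈ s, (if P σ then (1 : R) else 0) ≤ 1 := by
  rw [Finset.sum_boole]
  have : (s.filter P).card ≤ 1 := Finset.card_le_one.mpr (by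
    intro a ha b hb
    rw [Finset.mem_filter] at ha hb
    exact h a ha.1 b hb.1 ha.2 hb.2)
  calc ((Finset.filter (fun x => P x) s).card : R) ≤ ((1:ℕ) : R) := Nat.mono_cast this
    _ = 1 := Nat.cast_one

lemma neuron_sum_bound (W : ℕ → ℤ) (inp : ℕ → ℤ) (T : ℤ)
    (hin : ∀ σ, 0 ≤ inp σ)
    (hE : ∀ τ, W (τ + 1) = max 0 ((if T ≤ W τ then 0 else W τ) + inp τ)) :
    ∀ a b, a < b → T ≤ W a → W b ≤ ∑ σ ∈ Finset.Ico a b, inp σ := by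
  intro a b hab hsa
  induction b, hab using Nat.le_induction with
  | base =>
    rw [hE a, if_pos hsa]
    simp only [zero_add]
    rw [Finset.sum_Ico_eq_sum_range]
    simp [max_le_iff, hin a]
  | succ m hm ih =>
    have hnn : (0:ℤ) ≤ ∑ σ ∈ Finset.Ico a m, inp σ := Finset.sum_nonneg fun σ _ => hin σ
    rw [hE m, Finset.sum_Ico_succ_top (by omega : a ≤ m)]
    have hU : (if T ≤ W m then (0:ℤ) else W m) ≤ ∑ σ ∈ Finset.Ico a m, inp σ := by
      split_ifs with h
      · exact hnn
      · exact ih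
    have : (0:ℤ) ≤ ∑ σ ∈ Finset.Ico a m, inp σ + inp m := add_nonneg hnn (hin m)
    exact max_le this (by linarith)


/-- In the search network together with the readout network for a finite
directed graph `G = (V, E)` (transmitter `Tr`, neurons `H e` and `R e` for `e ∈ E`),
every neuron spikes at most once over the entire run; consequently the total number of
spikes over all time is at most `2|E| + 1`. -/
theorem search_readout_energy_bound
    {V : Type*} [DecidableEq V] (E : Finset (V × V)) (s t : V)
    (hst : s ≠ t) (hsIn : ∀ e ∈ E, e.2 ≠ s) (htOut : ∀ e ∈ E, e.1 ≠ t)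
    (VTr : ℕ → ℤ) (VH VR : V × V → ℕ → ℤ)
    (hTr0 : VTr 0 = 1)
    (hTrEvol : ∀ τ, VTr (τ + 1) =
      max 0 ((1 : ℤ) * (if (1 : ℤ) ≤ VTr τ then (0 : ℤ) else VTr τ)))
    (hH0 : ∀ e ∈ E, VH e 0 = (E.card : ℤ) + 1)
    (hHEvol : ∀ e ∈ E, ∀ τ, VH e (τ + 1) =
      max 0 ((1 : ℤ) * (if (E.card : ℤ) + 2 ≤ VH e τ then (0 : ℤ) else VH e τ) +
        (∑ e' ∈ E.filter (fun e' => e'.1 = e.2),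
          (if (E.card : ℤ) + 2 ≤ VH e' τ then (1 : ℤ) else 0)) +
        (if e.2 = t ∧ (1 : ℤ) ≤ VTr τ then (1 : ℤ) else 0)))
    (hR0 : ∀ e ∈ E, VR e 0 = (E.card : ℤ) + 1)
    (hREvol : ∀ e ∈ E, ∀ τ, VR e (τ + 1) =
      max 0 ((1 : ℤ) * (if (E.card : ℤ) + 2 ≤ VR e τ then (0 : ℤ) else VR e τ) +
        (if e.1 = s ∧ (E.card : ℤ) + 2 ≤ VH e τ then (1 : ℤ) else 0) +
        (∑ e' ∈ E.filter (fun e' => e'.2 = e.1),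
          (if (E.card : ℤ) + 2 ≤ VR e' τ then (1 : ℤ) else 0)))) :
    (∀ τ₁ τ₂, (1 : ℤ) ≤ VTr τ₁ → (1 : ℤ) ≤ VTr τ₂ → τ₁ = τ₂) ∧
    (∀ e ∈ E, ∀ τ₁ τ₂, (E.card : ℤ) + 2 ≤ VH e τ₁ → (E.card : ℤ) + 2 ≤ VH e τ₂ →
      τ₁ = τ₂) ∧
    (∀ e ∈ E, ∀ τ₁ τ₂, (E.card : ℤ) + 2 ≤ VR e τ₁ → (E.card : ℤ) + 2 ≤ VR e τ₂ →
      τ₁ = τ₂) ∧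
    (∀ N : ℕ, ∑ τ ∈ Finset.range N,
        ((if (1 : ℤ) ≤ VTr τ then 1 else 0) +
          ∑ e ∈ E, ((if (E.card : ℤ) + 2 ≤ VH e τ then 1 else 0) +
            (if (E.card : ℤ) + 2 ≤ VR e τ then 1 else 0))) ≤ 2 * E.card + 1) := by
  classical
  set C : ℤ := (E.card : ℤ) with hC
  -- transmitter spikes only at time 0
  have hTrval : ∀ τ, VTr τ = if τ = 0 then 1 else 0 := by
    intro τ
    induction τ with
    | zero => simp [hTr0]
    | succ n ih =>
      have h0 : VTr (n + 1) = 0 := by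
        rw [hTrEvol n, ih]
        split_ifs <;> simp_all
      simp [h0]
  have hTrspike : ∀ τ, (1 : ℤ) ≤ VTr τ → τ = 0 := by
    intro τ h
    by_contra hne
    rw [hTrval τ, if_neg hne] at h
    omega
  -- rearranged evolution equations
  have hHE : ∀ e ∈ E, ∀ τ, VH e (τ + 1) =
      max 0 ((if C + 2 ≤ VH e τ then 0 else VH e τ) +
        ((∑ e' ∈ E.filter (fun e' => e'.1 = e.2),
            (if C + 2 ≤ VH e' τ then (1 : ℤ) else 0)) +
          (if e.2 = t ∧ (1 : ℤ) ≤ VTr τ then (1 : ℤ) else 0))) := by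
    intro e he τ
    rw [hHEvol e he τ]
    congr 1
    ring
  have hRE : ∀ e ∈ E, ∀ τ, VR e (τ + 1) =
      max 0 ((if C + 2 ≤ VR e τ then 0 else VR e τ) +
        ((if e.1 = s ∧ C + 2 ≤ VH e τ then (1 : ℤ) else 0) +
          (∑ e' ∈ E.filter (fun e' => e'.2 = e.1),
            (if C + 2 ≤ VR e' τ then (1 : ℤ) else 0)))) := by
    intro e he τ
    rw [hREvol e he τ]
    congr 1
    ring
  have hinHnn : ∀ e : V × V, ∀ σ : ℕ, (0:ℤ) ≤ (∑ e' ∈ E.filter (fun e' => e'.1 = e.2),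
      (if C + 2 ≤ VH e' σ then (1 : ℤ) else 0)) +
      (if e.2 = t ∧ (1 : ℤ) ≤ VTr σ then (1 : ℤ) else 0) := by
    intro e σ
    have h1 : (0:ℤ) ≤ ∑ e' ∈ E.filter (fun e' => e'.1 = e.2),
        (if C + 2 ≤ VH e' σ then (1 : ℤ) else 0) :=
      Finset.sum_nonneg fun e' _ => by positivity
    have h2 : (0:ℤ) ≤ (if e.2 = t ∧ (1 : ℤ) ≤ VTr σ then (1 : ℤ) else 0) := by positivity
    linarith
  have hinRnn : ∀ e : V × V, ∀ σ : ℕ, (0:ℤ) ≤ (if e.1 = s ∧ C + 2 ≤ VH e σ then (1 : ℤ) else 0) +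
      (∑ e' ∈ E.filter (fun e' => e'.2 = e.1),
        (if C + 2 ≤ VR e' σ then (1 : ℤ) else 0)) := by
    intro e σ
    have h1 : (0:ℤ) ≤ ∑ e' ∈ E.filter (fun e' => e'.2 = e.1),
        (if C + 2 ≤ VR e' σ then (1 : ℤ) else 0) :=
      Finset.sum_nonneg fun e' _ => by positivity
    have h2 : (0:ℤ) ≤ (if e.1 = s ∧ C + 2 ≤ VH e σ then (1 : ℤ) else 0) := by positivity
    linarith
  -- uniqueness of spikes, simultaneous induction on horizon
  have Q : ∀ n : ℕ,
      (∀ e ∈ E, ∀ τ₁ τ₂, τ₁ ≤ n → τ₂ ≤ n →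
        C + 2 ≤ VH e τ₁ → C + 2 ≤ VH e τ₂ → τ₁ = τ₂) ∧
      (∀ e ∈ E, ∀ τ₁ τ₂, τ₁ ≤ n → τ₂ ≤ n →
        C + 2 ≤ VR e τ₁ → C + 2 ≤ VR e τ₂ → τ₁ = τ₂) := by
    intro n
    induction n with
    | zero =>
      constructor
      · intro e he τ₁ τ₂ h1 h2 _ _
        omega
      · intro e he τ₁ τ₂ h1 h2 _ _
        omega
    | succ n ih =>
      obtain ⟨ihH, ihR⟩ := ih
      have noH : ∀ e ∈ E, ∀ a b, a < b → b ≤ n + 1 →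
          C + 2 ≤ VH e a → ¬ (C + 2 ≤ VH e b) := by
        intro e he a b hab hb hsa hsb
        have hbd := neuron_sum_bound (VH e)
          (fun σ => (∑ e' ∈ E.filter (fun e' => e'.1 = e.2),
              (if C + 2 ≤ VH e' σ then (1 : ℤ) else 0)) +
            (if e.2 = t ∧ (1 : ℤ) ≤ VTr σ then (1 : ℤ) else 0))
          (C + 2) (hinHnn e) (hHE e he) a b hab hsa
        have hsplit : ∑ σ ∈ Finset.Ico a b,
            ((∑ e' ∈ E.filter (fun e' => e'.1 = e.2),
              (if C + 2 ≤ VH e' σ then (1 : ℤ) else 0)) +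
            (if e.2 = t ∧ (1 : ℤ) ≤ VTr σ then (1 : ℤ) else 0)) ≤ C + 1 := by
          rw [Finset.sum_add_distrib, Finset.sum_comm]
          have h1 : ∑ e' ∈ E.filter (fun e' => e'.1 = e.2),
              ∑ σ ∈ Finset.Ico a b, (if C + 2 ≤ VH e' σ then (1 : ℤ) else 0) ≤
              ∑ e' ∈ E.filter (fun e' => e'.1 = e.2), (1:ℤ) := by
            refine Finset.sum_le_sum fun e' he' => indsum_le_one _ _ ?_
            intro σ₁ hσ₁ σ₂ hσ₂ p1 p2
            rw [Finset.mem_Ico] at hσ₁ hσ₂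
            exact ihH e' (Finset.mem_filter.mp he').1 σ₁ σ₂ (by omega) (by omega) p1 p2
          have h2 : ∑ σ ∈ Finset.Ico a b,
              (if e.2 = t ∧ (1 : ℤ) ≤ VTr σ then (1 : ℤ) else 0) ≤ 1 := by
            refine indsum_le_one _ _ ?_
            intro σ₁ _ σ₂ _ p1 p2
            rw [hTrspike σ₁ p1.2, hTrspike σ₂ p2.2]
          have h3 : ∑ e' ∈ E.filter (fun e' => e'.1 = e.2), (1:ℤ) ≤ C := by
            rw [Finset.sum_const, nsmul_eq_mul, mul_one, hC]
            exact_mod_cast Finset.card_filter_le E _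
          linarith
        linarith
      have noR : ∀ e ∈ E, ∀ a b, a < b → b ≤ n + 1 →
          C + 2 ≤ VR e a → ¬ (C + 2 ≤ VR e b) := by
        intro e he a b hab hb hsa hsb
        have hbd := neuron_sum_bound (VR e)
          (fun σ => (if e.1 = s ∧ C + 2 ≤ VH e σ then (1 : ℤ) else 0) +
            (∑ e' ∈ E.filter (fun e' => e'.2 = e.1),
              (if C + 2 ≤ VR e' σ then (1 : ℤ) else 0)))
          (C + 2) (hinRnn e) (hRE e he) a b hab hsa
        have hsplit : ∑ σ ∈ Finset.Ico a b,
            ((if e.1 = s ∧ C + 2 ≤ VH e σ then (1 : ℤ) else 0) +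
            (∑ e' ∈ E.filter (fun e' => e'.2 = e.1),
              (if C + 2 ≤ VR e' σ then (1 : ℤ) else 0))) ≤ C + 1 := by
          rw [Finset.sum_add_distrib, Finset.sum_comm]
          have h1 : ∑ e' ∈ E.filter (fun e' => e'.2 = e.1),
              ∑ σ ∈ Finset.Ico a b, (if C + 2 ≤ VR e' σ then (1 : ℤ) else 0) ≤
              ∑ e' ∈ E.filter (fun e' => e'.2 = e.1), (1:ℤ) := by
            refine Finset.sum_le_sum fun e' he' => indsum_le_one _ _ ?_
            intro σ₁ hσ₁ σ₂ hσ₂ p1 p2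
            rw [Finset.mem_Ico] at hσ₁ hσ₂
            exact ihR e' (Finset.mem_filter.mp he').1 σ₁ σ₂ (by omega) (by omega) p1 p2
          have h2 : ∑ σ ∈ Finset.Ico a b,
              (if e.1 = s ∧ C + 2 ≤ VH e σ then (1 : ℤ) else 0) ≤ 1 := by
            refine indsum_le_one _ _ ?_
            intro σ₁ hσ₁ σ₂ hσ₂ p1 p2
            rw [Finset.mem_Ico] at hσ₁ hσ₂
            exact ihH e he σ₁ σ₂ (by omega) (by omega) p1.2 p2.2
          have h3 : ∑ e' ∈ E.filter (fun e' => e'.2 = e.1), (1:ℤ) ≤ C := by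
            rw [Finset.sum_const, nsmul_eq_mul, mul_one, hC]
            exact_mod_cast Finset.card_filter_le E _
          linarith
        linarith
      constructor
      · intro e he τ₁ τ₂ h1 h2 s1 s2
        rcases lt_trichotomy τ₁ τ₂ with h | h | h
        · exact absurd s2 (noH e he τ₁ τ₂ h h2 s1)
        · exact h
        · exact absurd s1 (noH e he τ₂ τ₁ h h1 s2)
      · intro e he τ₁ τ₂ h1 h2 s1 s2
        rcases lt_trichotomy τ₁ τ₂ with h | h | h
        · exact absurd s2 (noR e he τ₁ τ₂ h h2 s1)
        · exact h
        · exact absurd s1 (noR e he τ₂ τ₁ h h1 s2)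
  have uniqH : ∀ e ∈ E, ∀ τ₁ τ₂, C + 2 ≤ VH e τ₁ → C + 2 ≤ VH e τ₂ → τ₁ = τ₂ :=
    fun e he τ₁ τ₂ s1 s2 =>
      (Q (max τ₁ τ₂)).1 e he τ₁ τ₂ (le_max_left _ _) (le_max_right _ _) s1 s2
  have uniqR : ∀ e ∈ E, ∀ τ₁ τ₂, C + 2 ≤ VR e τ₁ → C + 2 ≤ VR e τ₂ → τ₁ = τ₂ :=
    fun e he τ₁ τ₂ s1 s2 =>
      (Q (max τ₁ τ₂)).2 e he τ₁ τ₂ (le_max_left _ _) (le_max_right _ _) s1 s2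
  refine ⟨fun τ₁ τ₂ h1 h2 => by rw [hTrspike τ₁ h1, hTrspike τ₂ h2], uniqH, uniqR, ?_⟩
  intro N
  have hTrsum : ∑ τ ∈ Finset.range N, (if (1:ℤ) ≤ VTr τ then (1:ℕ) else 0) ≤ 1 :=
    indsum_le_one _ _ (fun a _ b _ ha hb => by rw [hTrspike a ha, hTrspike b hb])
  have hHsum : ∀ e ∈ E, ∑ τ ∈ Finset.range N, (if C + 2 ≤ VH e τ then (1:ℕ) else 0) ≤ 1 :=
    fun e he => indsum_le_one _ _ (fun a _ b _ ha hb => uniqH e he a b ha hb)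
  have hRsum : ∀ e ∈ E, ∑ τ ∈ Finset.range N, (if C + 2 ≤ VR e τ then (1:ℕ) else 0) ≤ 1 :=
    fun e he => indsum_le_one _ _ (fun a _ b _ ha hb => uniqR e he a b ha hb)
  calc ∑ τ ∈ Finset.range N,
        ((if (1 : ℤ) ≤ VTr τ then 1 else 0) +
          ∑ e ∈ E, ((if C + 2 ≤ VH e τ then 1 else 0) +
            (if C + 2 ≤ VR e τ then 1 else 0)))
      = (∑ τ ∈ Finset.range N, (if (1 : ℤ) ≤ VTr τ then 1 else 0)) +
        ∑ e ∈ E, ∑ τ ∈ Finset.range N,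
          ((if C + 2 ≤ VH e τ then 1 else 0) + (if C + 2 ≤ VR e τ then 1 else 0)) := by
        rw [Finset.sum_add_distrib, Finset.sum_comm]
    _ ≤ 1 + ∑ e ∈ E, 2 := by
        refine add_le_add hTrsum (Finset.sum_le_sum fun e he => ?_)
        rw [Finset.sum_add_distrib]
        exact add_le_add (hHsum e he) (hRsum e he)
    _ ≤ 2 * E.card + 1 := by
        rw [Finset.sum_const, smul_eq_mul]
        omega
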